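/- Let E be a real inner product space, D a finite set with |D| = N, and f_n : E → ℝ differentiable for n ∈ D with global loss F(w) = (1/N)·∑_{n∈D} f_n(w). Assume F is μ-strongly convex and L-smooth with 0 < μ ≤ L, the sample-gradient bound ‖∇f_n(w)‖² ≤ ξ1 + ξ2·‖∇F(w)‖² holds for all n ∈ D and w ∈ E (ξ1 ≥ 0, ξ2 > 0), and w* is a global minimizer of F. Let N_f, N_c be positive integers with N_f ≤ N, N_c ≤ N, A = N_f·(N−N_f) + N_c·(N−N_c) > 0, and 0 < ξ2 < (N_f+N_c)²/(4A); set a1 = N_f/(N_f+N_c), a2 = N_c/(N_f+N_c), ρ1 = 1 − μ/L + 4μξ2·A/(L·(N_f+N_c)²), ρ2 = 2ξ1·A/(L·(N_f+N_c)²). For each round t = 1, …, T, let S_{f,t}, S_{c,t} ⊆ D with |S_{f,t}| = N_f, |S_{c,t}| = N_c, let g_t^f = (1/N_f)·∑_{n∈S_{f,t}} ∇f_n(w_t), g_t^c = (1/N_c)·∑_{n∈S_{c,t}} ∇f_n(w_t), let ĝ_t^f ∈ E satisfy ‖g_t^f − ĝ_t^f‖² ≤ ε_t with ε_t ≥ 0,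 and update w_{t+1} = w_t − (1/L)·(a1·ĝ_t^f + a2·g_t^c). Then the optimality gap after T rounds satisfies F(w_{T+1}) − F(w*) ≤ ρ1^T·(F(w_1) − F(w*)) + ρ2·(1 − ρ1^T)/(1 − ρ1) + ∑_{t=1}^T ρ1^{T−t}·(a1²/L)·ε_t. -/

import Mathlib

local notation "⟪" x ", " y "⟫" => @inner ℝ _ _ x y

lemma gradient_const_mul_sum
    {E : Type*} [NormedAddCommGroup E] [InnerProductSpace ℝ E] [CompleteSpace E]
    {ι : Type*} (D : Finset ι) (f : ι → E → ℝ)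
    (hf : ∀ n ∈ D, Differentiable ℝ (f n)) (c : ℝ) (x : E) :
    gradient (fun w => c * ∑ n ∈ D, f n w) x = c • ∑ n ∈ D, gradient (f n) x := by
  have h1 : HasFDerivAt (fun w => c * ∑ n ∈ D, f n w)
      (c • ∑ n ∈ D, fderiv ℝ (f n) x) x :=
    (HasFDerivAt.fun_sum (fun n hn => ((hf n hn).differentiableAt.hasFDerivAt))).const_mul c
  have h2 := (hasFDerivAt_iff_hasGradientAt.mp h1).gradient
  rw [h2, map_smul, map_sum]
  rfl

lemma avg_dev
    {E : Type*} [NormedAddCommGroup E] [InnerProductSpace ℝ E]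
    {ι : Type*} [DecidableEq ι] (D S : Finset ι) (hS : S ⊆ D) (x : ι → E) (s : ℝ)
    (hs : ∀ n ∈ D, ‖x n‖ ≤ s) (m N : ℕ) (hm : S.card = m) (hD : D.card = N)
    (hmpos : 0 < m) (hmN : m ≤ N) :
    ‖(1 / (m : ℝ)) • ∑ n ∈ S, x n - (1 / (N : ℝ)) • ∑ n ∈ D, x n‖
      ≤ 2 * ((N : ℝ) - m) / N * s := by
  have hNpos : 0 < N := lt_of_lt_of_le hmpos hmN
  have hm' : (0:ℝ) < m := by exact_mod_cast hmpos
  have hN' : (0:ℝ) < N := by exact_mod_cast hNpos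
  have hsplit : ∑ n ∈ D, x n = ∑ n ∈ S, x n + ∑ n ∈ D \ S, x n := by
    rw [add_comm, Finset.sum_sdiff hS]
  have hsnn : 0 ≤ s := by
    obtain ⟨n, hn⟩ := Finset.card_pos.mp (hm ▸ hmpos)
    exact le_trans (norm_nonneg _) (hs n (hS hn))
  have hbS : ‖∑ n ∈ S, x n‖ ≤ (m : ℝ) * s := by
    calc ‖∑ n ∈ S, x n‖ ≤ ∑ n ∈ S, ‖x n‖ := norm_sum_le _ _
    _ ≤ ∑ _n ∈ S, s := Finset.sum_le_sum (fun n hn => hs n (hS hn))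
    _ = (m : ℝ) * s := by rw [Finset.sum_const, hm, nsmul_eq_mul]
  have hcard : (D \ S).card = N - m := by rw [Finset.card_sdiff_of_subset hS, hm, hD]
  have hbDS : ‖∑ n ∈ D \ S, x n‖ ≤ ((N : ℝ) - m) * s := by
    calc ‖∑ n ∈ D \ S, x n‖ ≤ ∑ n ∈ D \ S, ‖x n‖ := norm_sum_le _ _
    _ ≤ ∑ _n ∈ D \ S, s := Finset.sum_le_sum (fun n hn => hs n (Finset.sdiff_subset hn))
    _ = ((N : ℝ) - m) * s := by
        rw [Finset.sum_const, hcard, nsmul_eq_mul, Nat.cast_sub hmN]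
  have heq : (1 / (m : ℝ)) • ∑ n ∈ S, x n - (1 / (N : ℝ)) • ∑ n ∈ D, x n
      = (1 / (m : ℝ) - 1 / N) • ∑ n ∈ S, x n + (-(1 / (N : ℝ))) • ∑ n ∈ D \ S, x n := by
    rw [hsplit, smul_add, sub_smul]
    module
  rw [heq]
  have h1 : ‖(1 / (m : ℝ) - 1 / N) • ∑ n ∈ S, x n‖ ≤ (1 / (m : ℝ) - 1 / N) * ((m:ℝ) * s) := by
    rw [norm_smul]
    have : 0 ≤ 1 / (m : ℝ) - 1 / N := by
      have : (1:ℝ)/N ≤ 1/m := by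
        apply one_div_le_one_div_of_le hm'
        exact_mod_cast hmN
      linarith
    rw [Real.norm_eq_abs, abs_of_nonneg this]
    exact mul_le_mul_of_nonneg_left hbS this
  have h2 : ‖(-(1 / (N : ℝ))) • ∑ n ∈ D \ S, x n‖ ≤ (1 / (N:ℝ)) * (((N:ℝ) - m) * s) := by
    rw [norm_smul, Real.norm_eq_abs, abs_neg, abs_of_nonneg (by positivity)]
    exact mul_le_mul_of_nonneg_left hbDS (by positivity)
  calc ‖(1 / (m : ℝ) - 1 / N) • ∑ n ∈ S, x n + (-(1 / (N : ℝ))) • ∑ n ∈ D \ S, x n‖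
      ≤ ‖(1 / (m : ℝ) - 1 / N) • ∑ n ∈ S, x n‖ + ‖(-(1 / (N : ℝ))) • ∑ n ∈ D \ S, x n‖ :=
        norm_add_le _ _
    _ ≤ (1 / (m : ℝ) - 1 / N) * ((m:ℝ) * s) + (1 / (N:ℝ)) * (((N:ℝ) - m) * s) := by
        linarith
    _ = 2 * ((N : ℝ) - m) / N * s := by field_simp; ring

set_option maxHeartbeats 2000000 in
theorem semifl_optimality_gap
    {E : Type*} [NormedAddCommGroup E] [InnerProductSpace ℝ E] [CompleteSpace E]
    {ι : Type*} (D : Finset ι) (N : ℕ) (hN : D.card = N)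
    (f : ι → E → ℝ) (hf : ∀ n ∈ D, Differentiable ℝ (f n))
    (F : E → ℝ) (hF : ∀ w : E, F w = (1 / (N : ℝ)) * ∑ n ∈ D, f n w)
    (μ L : ℝ) (hμ : 0 < μ) (hμL : μ ≤ L)
    (hsc : ∀ w w' : E,
      F w ≥ F w' + ⟪w - w', gradient F w'⟫ + μ / 2 * ‖w - w'‖ ^ 2)
    (hsm : ∀ w w' : E,
      F w ≤ F w' + ⟪w - w', gradient F w'⟫ + L / 2 * ‖w - w'‖ ^ 2)
    (ξ1 ξ2 : ℝ) (hξ1 : 0 ≤ ξ1) (hξ2pos : 0 < ξ2)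
    (hgradbound : ∀ n ∈ D, ∀ w : E,
      ‖gradient (f n) w‖ ^ 2 ≤ ξ1 + ξ2 * ‖gradient F w‖ ^ 2)
    (wstar : E) (hmin : ∀ w : E, F wstar ≤ F w)
    (Nf Nc : ℕ) (hNf : 0 < Nf) (hNc : 0 < Nc) (hNfN : Nf ≤ N) (hNcN : Nc ≤ N)
    (A : ℝ) (hA : A = (Nf : ℝ) * ((N : ℝ) - Nf) + (Nc : ℝ) * ((N : ℝ) - Nc))
    (hApos : 0 < A)
    (hξ2A : ξ2 < ((Nf : ℝ) + Nc) ^ 2 / (4 * A))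
    (a1 a2 : ℝ) (ha1 : a1 = (Nf : ℝ) / ((Nf : ℝ) + Nc))
    (ha2 : a2 = (Nc : ℝ) / ((Nf : ℝ) + Nc))
    (ρ1 ρ2 : ℝ)
    (hρ1 : ρ1 = 1 - μ / L + 4 * μ * ξ2 * A / (L * ((Nf : ℝ) + Nc) ^ 2))
    (hρ2 : ρ2 = 2 * ξ1 * A / (L * ((Nf : ℝ) + Nc) ^ 2))
    (T : ℕ) (hT : 1 ≤ T)
    (Sf Sc : ℕ → Finset ι)
    (hSfD : ∀ t : ℕ, 1 ≤ t → t ≤ T → Sf t ⊆ D)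
    (hScD : ∀ t : ℕ, 1 ≤ t → t ≤ T → Sc t ⊆ D)
    (hSf : ∀ t : ℕ, 1 ≤ t → t ≤ T → (Sf t).card = Nf)
    (hSc : ∀ t : ℕ, 1 ≤ t → t ≤ T → (Sc t).card = Nc)
    (w : ℕ → E) (gfhat : ℕ → E) (ε : ℕ → ℝ)
    (hε : ∀ t : ℕ, 1 ≤ t → t ≤ T → 0 ≤ ε t)
    (hagg : ∀ t : ℕ, 1 ≤ t → t ≤ T →
      ‖(1 / (Nf : ℝ)) • ∑ n ∈ Sf t, gradient (f n) (w t) - gfhat t‖ ^ 2 ≤ ε t)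
    (hupd : ∀ t : ℕ, 1 ≤ t → t ≤ T →
      w (t + 1) = w t - (1 / L) •
        (a1 • gfhat t + a2 • ((1 / (Nc : ℝ)) • ∑ n ∈ Sc t, gradient (f n) (w t)))) :
    F (w (T + 1)) - F wstar ≤
      ρ1 ^ T * (F (w 1) - F wstar) + ρ2 * (1 - ρ1 ^ T) / (1 - ρ1)
        + ∑ t ∈ Finset.Icc 1 T, ρ1 ^ (T - t) * (a1 ^ 2 / L) * ε t := by
  classical
  have hL : 0 < L := lt_of_lt_of_le hμ hμL
  have hNpos : 0 < N := lt_of_lt_of_le hNf hNfN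
  have hN' : (0:ℝ) < N := by exact_mod_cast hNpos
  have hNf' : (0:ℝ) < Nf := by exact_mod_cast hNf
  have hNc' : (0:ℝ) < Nc := by exact_mod_cast hNc
  have hfc : (0:ℝ) < (Nf:ℝ) + Nc := by linarith
  set P : ℝ := ((Nf:ℝ) + Nc) ^ 2 with hP
  have hPpos : 0 < P := by positivity
  have h4A : 4 * A * ξ2 < P := by
    have h := hξ2A
    rw [lt_div_iff₀ (by positivity : (0:ℝ) < 4 * A)] at h
    linarith
  -- gradient of F
  have hgradF : ∀ x : E, gradient F x = (1/(N:ℝ)) • ∑ n ∈ D, gradient (f n) x := by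
    intro x
    have hFeq : F = fun w => (1/(N:ℝ)) * ∑ n ∈ D, f n w := funext hF
    rw [hFeq, gradient_const_mul_sum D f hf (1/(N:ℝ)) x]
  -- PL inequality
  have hPL : ∀ x : E, 2 * μ * (F x - F wstar) ≤ ‖gradient F x‖ ^ 2 := by
    intro x
    have h := hsc wstar x
    have hsq : (0:ℝ) ≤ ‖μ • (wstar - x) + gradient F x‖ ^ 2 := sq_nonneg _
    rw [norm_add_sq_real, real_inner_smul_left, norm_smul, Real.norm_eq_abs,
      abs_of_pos hμ, mul_pow] at hsq
    have h2 : 2*μ*(⟪wstar - x, gradient F x⟫ + μ/2*‖wstar - x‖^2)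
        ≤ 2*μ*(F wstar - F x) :=
      mul_le_mul_of_nonneg_left (by linarith) (by positivity)
    clear * - hsq h2 hμ
    nlinarith [hsq, h2]
  have ha1nn : 0 ≤ a1 := by rw [ha1]; positivity
  have ha12 : a1 + a2 = 1 := by rw [ha1, ha2]; field_simp
  -- per-round contraction
  have key : ∀ t : ℕ, 1 ≤ t → t ≤ T →
      F (w (t+1)) - F wstar ≤ ρ1 * (F (w t) - F wstar) + ρ2 + a1^2 / L * ε t := by
    intro t ht1 ht2
    set x := w t with hx
    set g := gradient F x with hg
    set B := ξ1 + ξ2 * ‖g‖^2 with hB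
    have hBnn : 0 ≤ B := by positivity
    set s := Real.sqrt B with hsdef
    have hs2 : s ^ 2 = B := Real.sq_sqrt hBnn
    have hsnn : 0 ≤ s := Real.sqrt_nonneg _
    have hs : ∀ n ∈ D, ‖gradient (f n) x‖ ≤ s := by
      intro n hn
      have h0 : ‖gradient (f n) x‖ = Real.sqrt (‖gradient (f n) x‖^2) :=
        (Real.sqrt_sq (norm_nonneg _)).symm
      rw [h0]
      exact Real.sqrt_le_sqrt (hgradbound n hn x)
    set gf := (1/(Nf:ℝ)) • ∑ n ∈ Sf t, gradient (f n) x with hgf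
    set gc := (1/(Nc:ℝ)) • ∑ n ∈ Sc t, gradient (f n) x with hgc
    have hgfb : ‖gf - g‖ ≤ 2 * ((N:ℝ) - Nf)/N * s := by
      rw [hg, hgradF x]
      exact avg_dev D (Sf t) (hSfD t ht1 ht2) _ s hs Nf N (hSf t ht1 ht2) hN hNf hNfN
    have hgcb : ‖gc - g‖ ≤ 2 * ((N:ℝ) - Nc)/N * s := by
      rw [hg, hgradF x]
      exact avg_dev D (Sc t) (hScD t ht1 ht2) _ s hs Nc N (hSc t ht1 ht2) hN hNc hNcN
    -- bound on the ideal aggregated gradient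
    have hgbar : ‖(a1 • gf + a2 • gc) - g‖ ≤ 2 * A / ((N:ℝ) * ((Nf:ℝ)+Nc)) * s := by
      have heq : (a1 • gf + a2 • gc) - g = a1 • (gf - g) + a2 • (gc - g) := by
        have h1 : a1 • g + a2 • g = g := by rw [← add_smul, ha12, one_smul]
        rw [smul_sub, smul_sub]
        rw [sub_eq_iff_eq_add]
        calc a1 • gf + a2 • gc = (a1 • gf - a1 • g + (a2 • gc - a2 • g)) + (a1 • g + a2 • g) := by
              abel
        _ = a1 • gf - a1 • g + (a2 • gc - a2 • g) + g := by rw [h1]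
      rw [heq]
      have ha2nn : 0 ≤ a2 := by rw [ha2]; positivity
      calc ‖a1 • (gf - g) + a2 • (gc - g)‖ ≤ ‖a1 • (gf - g)‖ + ‖a2 • (gc - g)‖ :=
            norm_add_le _ _
      _ = a1 * ‖gf - g‖ + a2 * ‖gc - g‖ := by
            rw [norm_smul, norm_smul, Real.norm_eq_abs, Real.norm_eq_abs,
              abs_of_nonneg ha1nn, abs_of_nonneg ha2nn]
      _ ≤ a1 * (2 * ((N:ℝ) - Nf)/N * s) + a2 * (2 * ((N:ℝ) - Nc)/N * s) := by
            have h1 := mul_le_mul_of_nonneg_left hgfb ha1nn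
            have h2 := mul_le_mul_of_nonneg_left hgcb ha2nn
            clear * - h1 h2
            linarith
      _ = 2 * A / ((N:ℝ) * ((Nf:ℝ)+Nc)) * s := by
            rw [ha1, ha2, hA]; field_simp
    have hgbarsq : ‖(a1 • gf + a2 • gc) - g‖^2 ≤ 2 * A / P * B := by
      have h2A : 2 * A ≤ (N:ℝ)^2 := by
        rw [hA]
        clear * - hN'
        nlinarith [sq_nonneg ((N:ℝ) - 2*Nf), sq_nonneg ((N:ℝ) - 2*Nc)]
      have h1 : ‖(a1 • gf + a2 • gc) - g‖^2 ≤ (2 * A / ((N:ℝ) * ((Nf:ℝ)+Nc)))^2 * s^2 := by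
        have := mul_self_le_mul_self (norm_nonneg _) hgbar
        calc ‖(a1 • gf + a2 • gc) - g‖^2 = ‖(a1 • gf + a2 • gc) - g‖ * ‖(a1 • gf + a2 • gc) - g‖ := pow_two _
        _ ≤ (2 * A / ((N:ℝ) * ((Nf:ℝ)+Nc)) * s) * (2 * A / ((N:ℝ) * ((Nf:ℝ)+Nc)) * s) := this
        _ = (2 * A / ((N:ℝ) * ((Nf:ℝ)+Nc)))^2 * s^2 := by ring
      rw [hs2] at h1
      have h2 : (2 * A / ((N:ℝ) * ((Nf:ℝ)+Nc)))^2 ≤ 2 * A / P := by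
        rw [hP, div_pow, div_le_div_iff₀ (by positivity) (by positivity)]
        have : (2*A)^2 * ((Nf:ℝ)+Nc)^2 ≤ 2*A*(N:ℝ)^2 * ((Nf:ℝ)+Nc)^2 := by
          have h5 := mul_le_mul_of_nonneg_left h2A
            (by positivity : (0:ℝ) ≤ 2*A*((Nf:ℝ)+Nc)^2)
          clear * - h5
          nlinarith [h5]
        calc (2*A)^2 * ((Nf:ℝ)+Nc)^2 ≤ 2*A*(N:ℝ)^2 * ((Nf:ℝ)+Nc)^2 := this
        _ = 2*A*((N:ℝ)*((Nf:ℝ)+Nc))^2 := by ring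
      calc ‖(a1 • gf + a2 • gc) - g‖^2 ≤ (2 * A / ((N:ℝ) * ((Nf:ℝ)+Nc)))^2 * B := h1
      _ ≤ 2 * A / P * B := mul_le_mul_of_nonneg_right h2 hBnn
    -- update & smoothness
    set v := a1 • gfhat t + a2 • gc with hv
    have hwt : w (t+1) = x - (1/L) • v := by
      rw [hv, hgc, hx]
      exact hupd t ht1 ht2
    have hnv : ‖v - g‖^2 = ‖v‖^2 - 2*⟪v, g⟫ + ‖g‖^2 := by
      rw [norm_sub_sq_real]
    have step1 : F (w (t+1)) ≤ F x + 1/(2*L) * ‖v - g‖^2 - 1/(2*L) * ‖g‖^2 := by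
      rw [hwt]
      have h := hsm (x - (1/L) • v) x
      have he : (x - (1/L) • v) - x = (-(1/L)) • v := by module
      rw [he, real_inner_smul_left] at h
      have hns : ‖(-(1/L)) • v‖^2 = (1/L)^2 * ‖v‖^2 := by
        rw [norm_smul, mul_pow, Real.norm_eq_abs, abs_neg, abs_of_pos (by positivity)]
      rw [hns] at h
      have hc1 : L/2 * ((1/L)^2 * ‖v‖^2) = 1/(2*L) * ‖v‖^2 := by
        field_simp
      have hc2 : 1/(2*L) * ‖v - g‖^2 = 1/(2*L)*‖v‖^2 - 1/L * ⟪v, g⟫ + 1/(2*L)*‖g‖^2 := by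
        rw [hnv]; field_simp
      rw [← hg] at h
      clear * - h hc1 hc2 hnv
      linarith [h]
    -- distortion bound
    have herr : ‖a1 • (gfhat t - gf)‖^2 ≤ a1^2 * ε t := by
      have h1 : ‖gfhat t - gf‖^2 ≤ ε t := by
        rw [norm_sub_rev]
        exact hagg t ht1 ht2
      rw [norm_smul, mul_pow, Real.norm_eq_abs, abs_of_nonneg ha1nn]
      exact mul_le_mul_of_nonneg_left h1 (by positivity)
    have hvg : ‖v - g‖^2 ≤ 2 * ‖(a1 • gf + a2 • gc) - g‖^2 + 2 * (a1^2 * ε t) := by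
      have hdec : v - g = ((a1 • gf + a2 • gc) - g) + a1 • (gfhat t - gf) := by
        rw [hv]; module
      rw [hdec]
      have := norm_add_sq_real ((a1 • gf + a2 • gc) - g) (a1 • (gfhat t - gf))
      have hip := real_inner_le_norm ((a1 • gf + a2 • gc) - g) (a1 • (gfhat t - gf))
      clear * - this hip herr
      nlinarith [sq_nonneg (‖(a1 • gf + a2 • gc) - g‖ - ‖a1 • (gfhat t - gf)‖), herr]
    -- combine
    have hGD := hPL x
    rw [← hg] at hGD
    have hPne' : P ≠ 0 := ne_of_gt hPpos
    have hc : 2*A*ξ2/P - 1/2 ≤ 0 := by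
      have h1 : 2*A*ξ2/P ≤ 1/2 := by
        rw [div_le_iff₀ hPpos]
        clear * - h4A
        linarith
      linarith
    have h3 : (2*A*ξ2/P - 1/2) * ‖g‖^2 ≤ (2*A*ξ2/P - 1/2) * (2*μ*(F x - F wstar)) :=
      mul_le_mul_of_nonpos_left hGD hc
    have h4 := mul_le_mul_of_nonneg_left h3 (le_of_lt (one_div_pos.mpr hL))
    have hLne : (L:ℝ) ≠ 0 := ne_of_gt hL
    have hB2 : 1/(2*L) * ‖v - g‖^2 ≤ 1/(2*L) * (2 * (2 * A / P * B) + 2 * (a1^2 * ε t)) := by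
      apply mul_le_mul_of_nonneg_left _ (by positivity)
      clear * - hgbarsq hvg
      linarith [hgbarsq, hvg]
    rw [hB] at hB2
    have hexp1 : 1/(2*L) * (2 * (2 * A / P * (ξ1 + ξ2 * ‖g‖^2)) + 2 * (a1^2 * ε t))
        = 2*A*ξ1/(L*P) + (1/L)*((2*A*ξ2/P) * ‖g‖^2) + a1^2/L * ε t := by
      field_simp [hLne, hPne']
    have hexp2 : (1 - μ / L + 4 * μ * ξ2 * A / (L * P)) * (F x - F wstar)
          + 2 * ξ1 * A / (L * P) + a1^2/L * ε t
        = (F x - F wstar) + 2*A*ξ1/(L*P) + a1^2/L * ε t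
          + (1/L)*((2*A*ξ2/P - 1/2) * (2*μ*(F x - F wstar))) := by
      field_simp [hLne, hPne']; ring
    rw [hexp1] at hB2
    calc F (w (t+1)) - F wstar
        ≤ (F x - F wstar) + 1/(2*L) * ‖v - g‖^2 - 1/(2*L) * ‖g‖^2 := by
          clear * - step1
          linarith [step1]
      _ ≤ (F x - F wstar) + 2*A*ξ1/(L*P) + (1/L)*((2*A*ξ2/P) * ‖g‖^2) + a1^2/L * ε t
            - 1/(2*L) * ‖g‖^2 := by
          clear * - hB2
          linarith [hB2]
      _ = (F x - F wstar) + 2*A*ξ1/(L*P) + a1^2/L * ε t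
            + (1/L)*((2*A*ξ2/P - 1/2) * ‖g‖^2) := by
            clear * - hLne hPne'
            field_simp
            ring
      _ ≤ (F x - F wstar) + 2*A*ξ1/(L*P) + a1^2/L * ε t
            + (1/L)*((2*A*ξ2/P - 1/2) * (2*μ*(F x - F wstar))) := by
          clear * - h4
          linarith [h4]
      _ = ρ1 * (F x - F wstar) + ρ2 + a1^2/L * ε t := by
            rw [hρ1, hρ2]
            exact hexp2.symm
  -- ρ1 bounds
  have hρ1pos : 0 < ρ1 := by
    rw [hρ1]
    have h1 : μ / L ≤ 1 := (div_le_one hL).mpr hμL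
    have h2 : 0 < 4 * μ * ξ2 * A / (L * ((Nf:ℝ)+Nc)^2) := by positivity
    linarith
  have hρ1lt : ρ1 < 1 := by
    rw [hρ1]
    have h2 : 4 * μ * ξ2 * A / (L * ((Nf:ℝ)+Nc)^2) < μ / L := by
      rw [div_lt_div_iff₀ (by positivity) hL]
      calc 4 * μ * ξ2 * A * L = (4 * A * ξ2) * (μ * L) := by ring
      _ < P * (μ * L) := by
          apply mul_lt_mul_of_pos_right h4A (by positivity)
      _ = μ * (L * ((Nf:ℝ)+Nc)^2) := by rw [hP]; ring
    linarith
  have hρ2nn : 0 ≤ ρ2 := by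
    rw [hρ2]; positivity
  -- induction
  have hind : ∀ k : ℕ, k ≤ T →
      F (w (k+1)) - F wstar ≤ ρ1^k * (F (w 1) - F wstar)
        + ρ2 * ∑ j ∈ Finset.range k, ρ1^j
        + ∑ t ∈ Finset.Icc 1 k, ρ1^(k-t) * (a1^2/L) * ε t := by
    intro k
    induction k with
    | zero => intro _; simp
    | succ k ih =>
      intro hk
      have hkT : k ≤ T := le_of_lt (lt_of_lt_of_le (Nat.lt_succ_self k) hk)
      have ihk := ih hkT
      have hkey := key (k+1) (Nat.succ_le_succ (Nat.zero_le k)) hk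
      have hmul := mul_le_mul_of_nonneg_left ihk (le_of_lt hρ1pos)
      have hsum1 : ρ1 * (ρ2 * ∑ j ∈ Finset.range k, ρ1^j) + ρ2
          = ρ2 * ∑ j ∈ Finset.range (k+1), ρ1^j := by
        rw [geom_sum_succ]; ring
      have hsum2 : ρ1 * (∑ t ∈ Finset.Icc 1 k, ρ1^(k-t) * (a1^2/L) * ε t)
            + ρ1^0 * (a1^2/L) * ε (k+1)
          = ∑ t ∈ Finset.Icc 1 (k+1), ρ1^(k+1-t) * (a1^2/L) * ε t := by
        rw [Finset.sum_Icc_succ_top (by omega : 1 ≤ k+1), Finset.mul_sum]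
        have hc : ∀ t ∈ Finset.Icc 1 k,
            ρ1 * (ρ1^(k-t) * (a1^2/L) * ε t) = ρ1^(k+1-t) * (a1^2/L) * ε t := by
          intro t ht
          have htk : t ≤ k := (Finset.mem_Icc.mp ht).2
          have he : k + 1 - t = (k - t) + 1 := by omega
          rw [he, pow_succ]; ring
        rw [Finset.sum_congr rfl hc]
        norm_num
      calc F (w (k+1+1)) - F wstar
          ≤ ρ1 * (F (w (k+1)) - F wstar) + ρ2 + a1^2/L * ε (k+1) := hkey
        _ ≤ ρ1 * (ρ1^k * (F (w 1) - F wstar) + ρ2 * ∑ j ∈ Finset.range k, ρ1^j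
              + ∑ t ∈ Finset.Icc 1 k, ρ1^(k-t) * (a1^2/L) * ε t)
              + ρ2 + a1^2/L * ε (k+1) := by
            clear * - hmul
            linarith [hmul]
        _ = ρ1^(k+1) * (F (w 1) - F wstar) + ρ2 * ∑ j ∈ Finset.range (k+1), ρ1^j
              + ∑ t ∈ Finset.Icc 1 (k+1), ρ1^(k+1-t) * (a1^2/L) * ε t := by
            rw [← hsum1, ← hsum2]; ring
  have hfinal := hind T (le_refl T)
  have hgeom : ρ2 * ∑ j ∈ Finset.range T, ρ1^j = ρ2 * (1 - ρ1^T) / (1 - ρ1) := by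
    rw [geom_sum_eq (ne_of_lt hρ1lt)]
    have h1 : ρ1 - 1 ≠ 0 := by intro h; exact (ne_of_lt hρ1lt) (by linarith)
    have h2 : (1:ℝ) - ρ1 ≠ 0 := by intro h; exact (ne_of_lt hρ1lt) (by linarith)
    field_simp
    ring
  rw [hgeom] at hfinal
  exact hfinal
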